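/- Transpose Lemma: for any (d+1)×(d+1) matrix A and degree N, the N-th symmetric power of the transpose satisfies (A^T)̄ = B^{-1} (Ā)^T B, where B is the diagonal matrix of multinomial coefficients B_{mm} = N!/(m_0!⋯m_d!). -/

import Mathlib

open MvPolynomial Matrix BigOperators

/-- Multi-indices of `d+1` entries with total degree `N`. -/
abbrev MIdx (d N : ℕ) := {m : Fin (d+1) → ℕ // ∑ i, m i = N}

instance (d N : ℕ) : Fintype (MIdx d N) :=
  Fintype.subtype (Finset.Nat.antidiagonalTuple (d+1) N)
    (fun _ => Finset.Nat.mem_antidiagonalTuple)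

/-- The `(m,n)` matrix element of the symmetric power of `A`:
the coefficient of `x^n` in `(Ax)^m`. -/
noncomputable def symPowEntry {R : Type} [CommSemiring R] {d : ℕ}
    (A : Matrix (Fin (d+1)) (Fin (d+1)) R) (m n : Fin (d+1) → ℕ) : R :=
  MvPolynomial.coeff (Finsupp.equivFunOnFinite.symm n)
    (∏ i, (∑ j, MvPolynomial.C (A i j) * MvPolynomial.X j) ^ m i)

/-- The `N`-th symmetric power of `A`, as a matrix indexed by multi-indices
of total degree `N`. -/
noncomputable def symPow {R : Type} [CommSemiring R] (d N : ℕ)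
    (A : Matrix (Fin (d+1)) (Fin (d+1)) R) : Matrix (MIdx d N) (MIdx d N) R :=
  fun m n => symPowEntry A m.1 n.1

/-- `Γ(g)_{mn}`: the coefficient of `x^n` in `(Σ_{μ,λ} g_{μλ} x_λ ∂_μ) x^m`. -/
noncomputable def gammaEntry {d : ℕ} (g : Matrix (Fin (d+1)) (Fin (d+1)) ℂ)
    (m n : Fin (d+1) → ℕ) : ℂ :=
  MvPolynomial.coeff (Finsupp.equivFunOnFinite.symm n)
    (∑ μ, ∑ lam, MvPolynomial.C (g μ lam) *
      (MvPolynomial.X lam * MvPolynomial.pderiv μ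
        (MvPolynomial.monomial (Finsupp.equivFunOnFinite.symm m) 1)))

/-- The degree-`N` generator `Γ(g)` of the symmetric representation. -/
noncomputable def gammaMat (d N : ℕ) (g : Matrix (Fin (d+1)) (Fin (d+1)) ℂ) :
    Matrix (MIdx d N) (MIdx d N) ℂ :=
  fun m n => gammaEntry g m.1 n.1

/-- The diagonal matrix `B` of multinomial coefficients of degree `N`. -/
noncomputable def multinomMat (d N : ℕ) : Matrix (MIdx d N) (MIdx d N) ℂ :=
  Matrix.diagonal fun m => (Nat.multinomial Finset.univ m.1 : ℂ)

section Aux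

variable {d : ℕ}

lemma my_prod_X_pow (c : Fin (d+1) → ℕ) :
    ∏ j, (X j : MvPolynomial (Fin (d+1)) ℂ) ^ c j
      = monomial (Finsupp.equivFunOnFinite.symm c) 1 := by
  rw [← prod_X_pow_eq_monomial]
  refine (Finset.prod_subset (Finset.subset_univ _) ?_).symm
  intro x _ hx
  simp only [Finsupp.mem_support_iff, ne_eq, not_not, Finsupp.coe_equivFunOnFinite_symm] at hx ⊢
  simp [hx]

lemma symPowEntry_eq_sum (A : Matrix (Fin (d+1)) (Fin (d+1)) ℂ) (m n : Fin (d+1) → ℕ) :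
    symPowEntry A m n
    = ∑ k ∈ Fintype.piFinset (fun i => Finset.univ.piAntidiag (m i)),
        if (fun j => ∑ i, k i j) = n then
          (∏ i, (Nat.multinomial Finset.univ (k i) : ℂ)) * ∏ i, ∏ j, A i j ^ k i j
        else 0 := by
  rw [symPowEntry]
  have h1 : ∀ i : Fin (d+1), (∑ j, MvPolynomial.C (A i j) * MvPolynomial.X j) ^ m i
      = ∑ k ∈ Finset.univ.piAntidiag (m i),
          (Nat.multinomial Finset.univ k : MvPolynomial (Fin (d+1)) ℂ) *
            ∏ j, (MvPolynomial.C (A i j) * MvPolynomial.X j) ^ k j := fun i =>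
    Finset.sum_pow_eq_sum_piAntidiag _ _ _
  simp_rw [h1]
  rw [Finset.prod_univ_sum]
  rw [MvPolynomial.coeff_sum]
  refine Finset.sum_congr rfl fun k hk => ?_
  have hterm : ∏ i, ((Nat.multinomial Finset.univ (k i) : MvPolynomial (Fin (d+1)) ℂ) *
      ∏ j, (MvPolynomial.C (A i j) * MvPolynomial.X j) ^ k i j)
      = MvPolynomial.C ((∏ i, (Nat.multinomial Finset.univ (k i) : ℂ)) *
          ∏ i, ∏ j, A i j ^ k i j) *
        ∏ j, (MvPolynomial.X j : MvPolynomial (Fin (d+1)) ℂ) ^ (∑ i, k i j) := by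
    calc ∏ i, ((Nat.multinomial Finset.univ (k i) : MvPolynomial (Fin (d+1)) ℂ) *
          ∏ j, (MvPolynomial.C (A i j) * MvPolynomial.X j) ^ k i j)
        = ∏ i, (MvPolynomial.C ((Nat.multinomial Finset.univ (k i) : ℂ) * ∏ j, A i j ^ k i j) *
            ∏ j, (MvPolynomial.X j : MvPolynomial (Fin (d+1)) ℂ) ^ k i j) := by
          refine Finset.prod_congr rfl fun i _ => ?_
          rw [← MvPolynomial.C_eq_coe_nat]
          simp_rw [mul_pow, ← MvPolynomial.C_pow]
          rw [Finset.prod_mul_distrib, ← mul_assoc, ← _root_.map_prod, ← _root_.map_mul]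
      _ = MvPolynomial.C (∏ i, ((Nat.multinomial Finset.univ (k i) : ℂ) * ∏ j, A i j ^ k i j)) *
            ∏ i, ∏ j, (MvPolynomial.X j : MvPolynomial (Fin (d+1)) ℂ) ^ k i j := by
          rw [Finset.prod_mul_distrib, ← _root_.map_prod]
      _ = _ := by
          rw [Finset.prod_mul_distrib (f := fun i => (Nat.multinomial Finset.univ (k i) : ℂ)),
            Finset.prod_comm (f := fun i j => (MvPolynomial.X j : MvPolynomial (Fin (d+1)) ℂ) ^ k i j)]
          simp_rw [Finset.prod_pow_eq_pow_sum]
  rw [hterm, MvPolynomial.coeff_C_mul, my_prod_X_pow, MvPolynomial.coeff_monomial]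
  simp only [EmbeddingLike.apply_eq_iff_eq]
  by_cases h : (fun j => ∑ i, k i j) = n <;> simp [h]

lemma multinomial_mul_eq (m : Fin (d+1) → ℕ) (k : Fin (d+1) → Fin (d+1) → ℕ)
    (hk : ∀ i, ∑ j, k i j = m i) :
    Nat.multinomial Finset.univ m * ∏ i, Nat.multinomial Finset.univ (k i)
      = Nat.multinomial (Finset.univ : Finset (Fin (d+1) × Fin (d+1))) (fun p => k p.1 p.2) := by
  have hP : 0 < ∏ p : Fin (d+1) × Fin (d+1), ((k p.1 p.2).factorial) :=
    Finset.prod_pos (fun _ _ => Nat.factorial_pos _)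
  apply Nat.eq_of_mul_eq_mul_left hP
  calc (∏ p : Fin (d+1) × Fin (d+1), (k p.1 p.2).factorial) *
        (Nat.multinomial Finset.univ m * ∏ i, Nat.multinomial Finset.univ (k i))
      = Nat.multinomial Finset.univ m *
          ∏ i, ((∏ j, (k i j).factorial) * Nat.multinomial Finset.univ (k i)) := by
        rw [Fintype.prod_prod_type, Finset.prod_mul_distrib]; ring
    _ = Nat.multinomial Finset.univ m * ∏ i, (∑ j, k i j).factorial := by
        simp_rw [Nat.multinomial_spec]
    _ = (∏ i, (m i).factorial) * Nat.multinomial Finset.univ m := by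
        simp_rw [hk]; ring
    _ = (∑ i, m i).factorial := Nat.multinomial_spec _ _
    _ = (∑ p : Fin (d+1) × Fin (d+1), k p.1 p.2).factorial := by
        rw [Fintype.sum_prod_type]; simp_rw [hk]
    _ = _ := (Nat.multinomial_spec _ _).symm

lemma mp_symm (k : Fin (d+1) → Fin (d+1) → ℕ) :
    Nat.multinomial (Finset.univ : Finset (Fin (d+1) × Fin (d+1))) (fun p => k p.1 p.2)
      = Nat.multinomial (Finset.univ : Finset (Fin (d+1) × Fin (d+1))) (fun p => k p.2 p.1) := by
  have hs : ∑ p : Fin (d+1) × Fin (d+1), k p.1 p.2 = ∑ p : Fin (d+1) × Fin (d+1), k p.2 p.1 :=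
    Fintype.sum_equiv (Equiv.prodComm (Fin (d+1)) (Fin (d+1))) _ _ (fun p => rfl)
  have hp : ∏ p : Fin (d+1) × Fin (d+1), (k p.1 p.2).factorial
      = ∏ p : Fin (d+1) × Fin (d+1), (k p.2 p.1).factorial :=
    Fintype.prod_equiv (Equiv.prodComm (Fin (d+1)) (Fin (d+1))) _ _ (fun p => rfl)
  rw [Nat.multinomial, Nat.multinomial, hs, hp]

lemma key_symm (A : Matrix (Fin (d+1)) (Fin (d+1)) ℂ) (m n : Fin (d+1) → ℕ) :
    (Nat.multinomial Finset.univ m : ℂ) * symPowEntry Aᵀ m n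
      = (Nat.multinomial Finset.univ n : ℂ) * symPowEntry A n m := by
  rw [symPowEntry_eq_sum, symPowEntry_eq_sum, Finset.mul_sum, Finset.mul_sum]
  simp_rw [mul_ite, mul_zero]
  rw [← Finset.sum_filter, ← Finset.sum_filter]
  refine Finset.sum_nbij' (fun k => fun a b => k b a) (fun k => fun a b => k b a) ?_ ?_ ?_ ?_ ?_
  · intro k hk
    rw [Finset.mem_filter, Fintype.mem_piFinset] at hk ⊢
    obtain ⟨h1, h2⟩ := hk
    refine ⟨fun i => ?_, ?_⟩
    · rw [Finset.mem_piAntidiag]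
      exact ⟨congrFun h2 i, fun _ _ => Finset.mem_univ _⟩
    · funext j
      have := h1 j
      rw [Finset.mem_piAntidiag] at this
      exact this.1
  · intro k hk
    rw [Finset.mem_filter, Fintype.mem_piFinset] at hk ⊢
    obtain ⟨h1, h2⟩ := hk
    refine ⟨fun i => ?_, ?_⟩
    · rw [Finset.mem_piAntidiag]
      exact ⟨congrFun h2 i, fun _ _ => Finset.mem_univ _⟩
    · funext j
      have := h1 j
      rw [Finset.mem_piAntidiag] at this
      exact this.1
  · intro k _; rfl
  · intro k _; rfl
  · intro k hk
    rw [Finset.mem_filter, Fintype.mem_piFinset] at hk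
    obtain ⟨h1, h2⟩ := hk
    have hrow : ∀ i, ∑ j, k i j = m i := by
      intro i
      have := h1 i
      rw [Finset.mem_piAntidiag] at this
      exact this.1
    have hcol : ∀ j, ∑ i, k i j = n j := fun j => congrFun h2 j
    have e1 : (Nat.multinomial Finset.univ m : ℂ) * ∏ i, (Nat.multinomial Finset.univ (k i) : ℂ)
        = (Nat.multinomial (Finset.univ : Finset (Fin (d+1) × Fin (d+1))) (fun p => k p.1 p.2) : ℂ) := by
      rw [← Nat.cast_prod, ← Nat.cast_mul, multinomial_mul_eq m k hrow]
    have e2 : (Nat.multinomial Finset.univ n : ℂ) *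
          ∏ i, (Nat.multinomial Finset.univ (fun b => k b i) : ℂ)
        = (Nat.multinomial (Finset.univ : Finset (Fin (d+1) × Fin (d+1))) (fun p => k p.2 p.1) : ℂ) := by
      rw [← Nat.cast_prod, ← Nat.cast_mul, multinomial_mul_eq n (fun a b => k b a) hcol]
    have e3 : ∏ i, ∏ j, Aᵀ i j ^ k i j = ∏ i, ∏ j, A i j ^ k j i := by
      rw [Finset.prod_comm]
      exact Finset.prod_congr rfl fun i _ => Finset.prod_congr rfl fun j _ => rfl
    rw [← mul_assoc, ← mul_assoc, e1, e2, mp_symm, e3]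

end Aux

/-- Transpose Lemma: `(Aᵀ)̄ = B⁻¹ (Ā)ᵀ B` with `B` the diagonal matrix of
multinomial coefficients. -/
theorem symPow_transpose (d N : ℕ) (A : Matrix (Fin (d+1)) (Fin (d+1)) ℂ) :
    symPow d N Aᵀ = (multinomMat d N)⁻¹ * (symPow d N A)ᵀ * multinomMat d N := by
  have hinv : (multinomMat d N)⁻¹
      = Matrix.diagonal (fun m : MIdx d N => ((Nat.multinomial Finset.univ m.1 : ℂ))⁻¹) := by
    apply Matrix.inv_eq_right_inv
    rw [multinomMat, Matrix.diagonal_mul_diagonal]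
    have h1 : (fun m : MIdx d N => (Nat.multinomial Finset.univ m.1 : ℂ) *
        (Nat.multinomial Finset.univ m.1 : ℂ)⁻¹) = fun _ => (1 : ℂ) := by
      funext m
      exact mul_inv_cancel₀ (Nat.cast_ne_zero.mpr (Nat.multinomial_pos _ _).ne')
    rw [h1, Matrix.diagonal_one]
  ext m n
  rw [hinv, multinomMat, Matrix.mul_diagonal, Matrix.diagonal_mul, Matrix.transpose_apply]
  have hm0 : (Nat.multinomial Finset.univ m.1 : ℂ) ≠ 0 :=
    Nat.cast_ne_zero.mpr (Nat.multinomial_pos _ _).ne'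
  have hkey := key_symm A m.1 n.1
  show symPowEntry Aᵀ m.1 n.1 = _ * symPowEntry A n.1 m.1 * _
  field_simp
  linear_combination hkey
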